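/- Let k, r be positive integers with r ≥ 2 and gcd(k+1, r-1) = 1, and set β = -(r-1)/(k+1). If λ is a (k,r,n)-admissible partition and j is an index with λ_j < λ_{j-1}, then for all i < j, (j-i)·β + λ_i - λ_j ≠ 1. -/
import Mathlib

private lemma lam_mono_aux (lam : ℕ → ℕ) (hmono : ∀ i, 1 ≤ i → lam (i + 1) ≤ lam i) :
    ∀ c a, 1 ≤ a → lam (a + c) ≤ lam a := by
  intro c
  induction c with
  | zero => intro a _; simp
  | succ c ih =>
    intro a ha
    have h1 := hmono (a + c) (by omega)
    have h2 := ih a ha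
    calc lam (a + (c+1)) = lam (a + c + 1) := by ring_nf
    _ ≤ lam (a + c) := h1
    _ ≤ lam a := h2

private lemma lam_chain (k r n : ℕ) (lam : ℕ → ℕ)
    (hadm : ∀ i, 1 ≤ i → i + k ≤ n → lam (i + k) + r ≤ lam i) (hk : 1 ≤ k) :
    ∀ t i, 1 ≤ i → i + t * k ≤ n → lam (i + t * k) + t * r ≤ lam i := by
  intro t
  induction t with
  | zero => intro i _ _; simp
  | succ t ih =>
    intro i hi hn
    have he : (t + 1) * k = t * k + k := by ring
    have her : (t + 1) * r = t * r + r := by ring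
    have h1 : i + t * k ≤ n := by omega
    have h2 := ih i hi h1
    have h3 := hadm (i + t * k) (by omega) (by omega)
    have he2 : i + (t + 1) * k = i + t * k + k := by omega
    rw [he2]
    omega

/-- For β = -(r-1)/(k+1), λ a (k,r,n)-admissible partition and
j an index with λ_j < λ_{j-1}, one has (j-i)·β + λ_i - λ_j ≠ 1 for all i < j. -/
theorem admissible_shifted_nonzero (k r n : ℕ) (hk : 1 ≤ k) (hr : 2 ≤ r)
    (hcop : Nat.Coprime (k + 1) (r - 1))
    (β : ℚ) (hβ : β = -((r : ℚ) - 1) / ((k : ℚ) + 1))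
    (lam : ℕ → ℕ)
    (hmono : ∀ i, 1 ≤ i → lam (i + 1) ≤ lam i)
    (hadm : ∀ i, 1 ≤ i → i + k ≤ n → lam (i + k) + r ≤ lam i)
    (j : ℕ) (hj2 : 2 ≤ j) (hjn : j ≤ n) (hdesc : lam j < lam (j - 1)) :
    ∀ i, 1 ≤ i → i < j →
      ((j : ℚ) - (i : ℚ)) * β + (lam i : ℚ) - (lam j : ℚ) ≠ 1 := by
  intro i hi hij heq
  rw [hβ] at heq
  have hk0 : ((k : ℚ) + 1) ≠ 0 := by positivity
  -- lam j ≤ lam i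
  have hlamji : lam j ≤ lam i := by
    have h := lam_mono_aux lam hmono (j - i) i hi
    have hji : i + (j - i) = j := by omega
    rwa [hji] at h
  set d := j - i with hd
  set m := lam i - lam j with hm
  have hdij : (j : ℚ) - i = (d : ℚ) := by
    rw [hd, Nat.cast_sub (le_of_lt hij)]
  have hmij : (lam i : ℚ) - lam j = (m : ℚ) := by
    rw [hm, Nat.cast_sub hlamji]
  -- rational key equation
  have keyQ : (d : ℚ) * ((r : ℚ) - 1) = ((k : ℚ) + 1) * ((m : ℚ) - 1) := by
    have h : ((j : ℚ) - i) * (-((r : ℚ) - 1) / ((k : ℚ) + 1)) = 1 - ((lam i : ℚ) - lam j) := by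
      linarith
    rw [hdij, hmij] at h
    field_simp at h
    linarith
  have hd1 : 1 ≤ d := by omega
  have hr1 : (1 : ℚ) ≤ (r : ℚ) - 1 := by
    have : (2:ℚ) ≤ (r:ℚ) := by exact_mod_cast hr
    linarith
  -- m ≥ 1
  have hm1 : 1 ≤ m := by
    by_contra h
    have hm0 : m = 0 := by omega
    rw [hm0] at keyQ
    have hdq : (1:ℚ) ≤ (d:ℚ) := by exact_mod_cast hd1
    push_cast at keyQ
    nlinarith
  -- integer and nat key equations
  have keyZ : (d : ℤ) * ((r : ℤ) - 1) = ((k : ℤ) + 1) * ((m : ℤ) - 1) := by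
    exact_mod_cast keyQ
  have keyN : d * (r - 1) = (k + 1) * (m - 1) := by
    have h1 : (1:ℕ) ≤ r := by omega
    zify [h1, hm1]
    linarith [keyZ]
  -- divisibility
  have hdvd : (k + 1) ∣ d := by
    have h1 : (k + 1) ∣ d * (r - 1) := ⟨m - 1, keyN⟩
    exact Nat.Coprime.dvd_of_dvd_mul_right hcop h1
  obtain ⟨t, ht⟩ := hdvd
  have ht1 : 1 ≤ t := by
    rcases Nat.eq_zero_or_pos t with h | h
    · subst h; simp at ht; omega
    · exact h
  have hmt : m - 1 = t * (r - 1) := by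
    have h : (k + 1) * (t * (r - 1)) = (k + 1) * (m - 1) := by
      rw [← keyN, ht]; ring
    exact (Nat.eq_of_mul_eq_mul_left (by omega) h).symm
  -- chain bound: lam i - lam j ≥ t * r
  have hdt : d = t * (k + 1) := by rw [ht]; ring
  have htkk : t * (k + 1) = t * k + t := by ring
  have hjk : j = i + t * k + t := by omega
  have htk : i + t * k ≤ n := by omega
  have hch := lam_chain k r n lam hadm hk t i hi htk
  have hmono2 : lam j ≤ lam (i + t * k) := by
    have h := lam_mono_aux lam hmono t (i + t * k) (by omega)
    rw [← hjk] at h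
    exact h
  have hbig : t * r + lam j ≤ lam i := by omega
  -- t = 1
  have htr : t * r = t * (r - 1) + t := by
    have h1 : r - 1 + 1 = r := by omega
    calc t * r = t * ((r - 1) + 1) := by rw [h1]
    _ = t * (r - 1) + t := by ring
  have hteq : t = 1 := by omega
  -- final contradiction using descent
  subst hteq
  have hji : j - 1 = i + k := by omega
  rw [hji] at hdesc
  have hadm1 := hadm i hi (by omega)
  omega
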